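/- Let n ≥ 1, let 𝒴 ⊆ ℝⁿ be a nonempty open set, let m ≥ 0, C ≥ 0 and ε > 0. Suppose F : ℝⁿ × ℝ × ℝⁿ → ℝ satisfies |F(y₁, q₁, p) − F(y₂, q₂, p)| ≤ C·‖p‖·(|q₁ − q₂| + ‖y₁ − y₂‖) for all y₁, y₂, q₁, q₂, p. Let u : 𝒴̄ → ℝ be Lipschitz continuous with constant m and a viscosity solution of F(y, u, Du) = 0 on 𝒴, and let u^ε be its sup-convolution. Define 𝒴_ε := { y ∈ 𝒴 : ‖y − w‖ > 2·m·ε for all w ∈ ∂𝒴 }. Then there exists a constant c̄ < ∞ depending only on C and m such that u^ε satisfies F(y, u^ε, Du^ε) ≤ c̄·ε in the viscosity sense on 𝒴_ε: for every twice continuously differentiable φ : ℝⁿ → ℝ, whenever u^ε − φ attains a local maximum at a point y ∈ 𝒴_ε, one has F(y, u^ε(y), ∇φ(y)) ≤ c̄·ε. -/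

import Mathlib

set_option maxHeartbeats 1000000

open Set

/-- `u` is a viscosity subsolution of `F (y, u y, Du y) = 0` on an open set `U ⊆ ℝⁿ`. -/
def IsViscositySubsolnOnE (n : ℕ)
    (F : EuclideanSpace ℝ (Fin n) → ℝ → EuclideanSpace ℝ (Fin n) → ℝ)
    (u : EuclideanSpace ℝ (Fin n) → ℝ) (U : Set (EuclideanSpace ℝ (Fin n))) : Prop :=
  ContinuousOn u U ∧
    ∀ φ : EuclideanSpace ℝ (Fin n) → ℝ, ContDiff ℝ 2 φ → ∀ y ∈ U,
      IsLocalMax (fun p => u p - φ p) y → F y (u y) (gradient φ y) ≤ 0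

/-- `u` is a viscosity supersolution of `F (y, u y, Du y) = 0` on an open set `U ⊆ ℝⁿ`. -/
def IsViscositySupersolnOnE (n : ℕ)
    (F : EuclideanSpace ℝ (Fin n) → ℝ → EuclideanSpace ℝ (Fin n) → ℝ)
    (u : EuclideanSpace ℝ (Fin n) → ℝ) (U : Set (EuclideanSpace ℝ (Fin n))) : Prop :=
  ContinuousOn u U ∧
    ∀ φ : EuclideanSpace ℝ (Fin n) → ℝ, ContDiff ℝ 2 φ → ∀ y ∈ U,
      IsLocalMin (fun p => u p - φ p) y → 0 ≤ F y (u y) (gradient φ y)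

/-- `u` is a viscosity solution of `F (y, u y, Du y) = 0` on an open set `U ⊆ ℝⁿ`. -/
def IsViscositySolnOnE (n : ℕ)
    (F : EuclideanSpace ℝ (Fin n) → ℝ → EuclideanSpace ℝ (Fin n) → ℝ)
    (u : EuclideanSpace ℝ (Fin n) → ℝ) (U : Set (EuclideanSpace ℝ (Fin n))) : Prop :=
  IsViscositySubsolnOnE n F u U ∧ IsViscositySupersolnOnE n F u U

theorem sqgrad {E : Type*} [NormedAddCommGroup E] [InnerProductSpace ℝ E] [CompleteSpace E]
    (a x : E) {ε : ℝ} (hε : 0 < ε) :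
    HasFDerivAt (fun p : E => ‖a - p‖^2 / (2*ε))
      (InnerProductSpace.toDual ℝ E (ε⁻¹ • (x - a))) x := by
  have h1 : HasFDerivAt (fun p : E => ‖p - a‖^2) (2 • (innerSL ℝ (x - a))) x := by
    simpa using ((hasFDerivAt_id x).sub_const a).norm_sq
  have h2 := h1.const_mul ((2*ε)⁻¹)
  have hfun : (fun p : E => (2*ε)⁻¹ * ‖p - a‖^2) = fun p : E => ‖a - p‖^2 / (2*ε) := by
    funext p; rw [norm_sub_rev, div_eq_inv_mul]
  rw [hfun] at h2
  refine h2.congr_fderiv ?_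
  ext v
  simp only [InnerProductSpace.toDual_apply_apply, ContinuousLinearMap.smul_apply,
    ContinuousLinearMap.coe_smul', Pi.smul_apply, innerSL_apply_apply, real_inner_smul_left,
    smul_eq_mul]
  field_simp
  ring

/-- Lemma A.8: if `u` is an `m`-Lipschitz viscosity solution of `F(y, u, Du) = 0` on an open
set `𝒴`, `F` satisfies `|F(y₁,q₁,p) − F(y₂,q₂,p)| ≤ C ‖p‖ (|q₁ − q₂| + ‖y₁ − y₂‖)`, and
`u^ε` is the sup-convolution of `u`, then there is `c̄ < ∞` depending only on `C` and `m`
such that `F(y, u^ε, Du^ε) ≤ c̄ ε` in the viscosity sense on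
`𝒴_ε = {y ∈ 𝒴 : ‖y − w‖ > 2 m ε for all w ∈ ∂𝒴}`. -/
theorem stmt_15 (n : ℕ) (hn : 1 ≤ n) (C m : ℝ) (hC : 0 ≤ C) (hm : 0 ≤ m) :
    ∃ cbar : ℝ,
      ∀ Y : Set (EuclideanSpace ℝ (Fin n)), IsOpen Y → Y.Nonempty →
      ∀ ε : ℝ, 0 < ε →
      ∀ F : EuclideanSpace ℝ (Fin n) → ℝ → EuclideanSpace ℝ (Fin n) → ℝ,
        (∀ y₁ y₂ q₁ q₂ p, |F y₁ q₁ p - F y₂ q₂ p| ≤ C * ‖p‖ * (|q₁ - q₂| + ‖y₁ - y₂‖)) →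
      ∀ u : EuclideanSpace ℝ (Fin n) → ℝ,
        (∀ y₁ ∈ closure Y, ∀ y₂ ∈ closure Y, |u y₁ - u y₂| ≤ m * ‖y₁ - y₂‖) →
        IsViscositySolnOnE n F u Y →
        ∀ φ : EuclideanSpace ℝ (Fin n) → ℝ, ContDiff ℝ 2 φ →
          ∀ y : EuclideanSpace ℝ (Fin n),
            y ∈ Y → (∀ w ∈ frontier Y, 2 * m * ε < ‖y - w‖) →
            IsLocalMax (fun p =>
              (⨆ w : closure Y,
                (u ↑w - ‖(w : EuclideanSpace ℝ (Fin n)) - p‖ ^ 2 / (2 * ε))) - φ p) y →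
            F y (⨆ w : closure Y,
                (u ↑w - ‖(w : EuclideanSpace ℝ (Fin n)) - y‖ ^ 2 / (2 * ε)))
              (gradient φ y) ≤ cbar * ε := by
  refine ⟨4*C*m^3 + 4*C*m^2, ?_⟩
  intro Y hYopen hYne ε hε F hF u hLip hsol φ hφ y hyY hyε hlm
  have hycl : y ∈ closure Y := subset_closure hyY
  haveI : Nonempty ↥(closure Y) := ⟨⟨y, hycl⟩⟩
  have h2ε : (0:ℝ) < 2*ε := by linarith
  -- quadratic facts
  have key : ∀ t : ℝ, m*t - t^2/(2*ε) ≤ m^2*ε/2 := by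
    intro t
    have h : m*t - m^2*ε/2 ≤ t^2/(2*ε) := by
      rw [le_div_iff₀ h2ε]; nlinarith [sq_nonneg (t - m*ε)]
    linarith
  -- boundedness of the sup-convolution family
  have hbdd : ∀ p : EuclideanSpace ℝ (Fin n),
      BddAbove (Set.range fun w : ↥(closure Y) =>
        u ↑w - ‖(w : EuclideanSpace ℝ (Fin n)) - p‖^2/(2*ε)) := by
    intro p
    refine ⟨u y + m*‖p - y‖ + m^2*ε/2, ?_⟩
    rintro _ ⟨w, rfl⟩
    have h1 : u ↑w - u y ≤ m * ‖(w : EuclideanSpace ℝ (Fin n)) - y‖ :=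
      (le_abs_self _).trans (hLip _ w.2 _ hycl)
    have h2 : ‖(w : EuclideanSpace ℝ (Fin n)) - y‖
        ≤ ‖(w : EuclideanSpace ℝ (Fin n)) - p‖ + ‖p - y‖ := by
      simpa [dist_eq_norm] using dist_triangle (w : EuclideanSpace ℝ (Fin n)) p y
    have h3 := key ‖(w : EuclideanSpace ℝ (Fin n)) - p‖
    have h4 : m * ‖(w : EuclideanSpace ℝ (Fin n)) - y‖
        ≤ m * ‖(w : EuclideanSpace ℝ (Fin n)) - p‖ + m * ‖p - y‖ := by
      nlinarith [mul_le_mul_of_nonneg_left h2 hm]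
    simp only []
    linarith
  -- maximizer of the sup-convolution
  set S : Set (EuclideanSpace ℝ (Fin n)) := closure Y ∩ Metric.closedBall y (2*m*ε) with hSdef
  have hScomp : IsCompact S :=
    (isCompact_closedBall y (2*m*ε)).of_isClosed_subset
      (isClosed_closure.inter Metric.isClosed_closedBall) inter_subset_right
  have hyS : y ∈ S := ⟨hycl, Metric.mem_closedBall_self (by positivity)⟩
  have hucont : ContinuousOn u (closure Y) := by
    have : LipschitzOnWith ⟨m, hm⟩ u (closure Y) := by
      apply LipschitzOnWith.of_dist_le_mul
      intro a ha b hb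
      rw [Real.dist_eq, dist_eq_norm]
      exact hLip a ha b hb
    exact this.continuousOn
  have hgcont : ContinuousOn (fun w : EuclideanSpace ℝ (Fin n) => u w - ‖w - y‖^2/(2*ε)) S := by
    refine (hucont.mono inter_subset_left).sub ?_
    exact (((continuous_id.sub continuous_const).norm.pow 2).div_const _).continuousOn
  obtain ⟨yh, hyhS, hyhmax⟩ := hScomp.exists_isMaxOn ⟨y, hyS⟩ hgcont
  have hyhcl : yh ∈ closure Y := hyhS.1
  have hr : ‖yh - y‖ ≤ 2*m*ε := by
    have := hyhS.2; rwa [Metric.mem_closedBall, dist_eq_norm] at this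
  have h3' : u y - ‖y - y‖^2/(2*ε) ≤ u yh - ‖yh - y‖^2/(2*ε) := hyhmax hyS
  have h3 : u y ≤ u yh - ‖yh - y‖^2/(2*ε) := by simpa using h3'
  have hle : ∀ w ∈ closure Y, u w - ‖w - y‖^2/(2*ε) ≤ u yh - ‖yh - y‖^2/(2*ε) := by
    intro w hw
    by_cases hcase : ‖w - y‖ ≤ 2*m*ε
    · exact hyhmax ⟨hw, by rwa [Metric.mem_closedBall, dist_eq_norm]⟩
    · push_neg at hcase
      have h1 : u w - u y ≤ m*‖w - y‖ := (le_abs_self _).trans (hLip _ hw _ hycl)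
      have h2 : m*‖w-y‖ - ‖w-y‖^2/(2*ε) ≤ 0 := by
        rw [sub_nonpos, le_div_iff₀ h2ε]
        nlinarith [norm_nonneg (w - y), mul_nonneg hm hε.le]
      linarith
  have huεy : (⨆ w : ↥(closure Y),
      (u ↑w - ‖(w : EuclideanSpace ℝ (Fin n)) - y‖^2/(2*ε)))
      = u yh - ‖yh - y‖^2/(2*ε) := by
    refine le_antisymm (ciSup_le fun w => hle _ w.2) ?_
    exact le_ciSup (hbdd y) (⟨yh, hyhcl⟩ : ↥(closure Y))
  have hyhY : yh ∈ Y := by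
    by_contra hnot
    have hfr : yh ∈ frontier Y := by
      rw [hYopen.frontier_eq]; exact ⟨hyhcl, hnot⟩
    have := hyε yh hfr
    rw [norm_sub_rev] at this
    linarith
  -- eventual inequality from the local max
  have h1 : ∀ᶠ p in nhds y,
      (⨆ w : ↥(closure Y), (u ↑w - ‖(w : EuclideanSpace ℝ (Fin n)) - p‖^2/(2*ε))) - φ p
      ≤ (⨆ w : ↥(closure Y), (u ↑w - ‖(w : EuclideanSpace ℝ (Fin n)) - y‖^2/(2*ε))) - φ y :=
    hlm
  -- gradient identity ∇φ y = ε⁻¹ • (yh - y)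
  have hφd : DifferentiableAt ℝ φ y := (hφ.differentiable two_ne_zero).differentiableAt
  have hφg : HasFDerivAt φ
      (InnerProductSpace.toDual ℝ (EuclideanSpace ℝ (Fin n)) (gradient φ y)) y :=
    hφd.hasGradientAt.hasFDerivAt
  have hsq := sqgrad yh y hε
  have hh : HasFDerivAt (fun p : EuclideanSpace ℝ (Fin n) => φ p + ‖yh - p‖^2/(2*ε))
      (InnerProductSpace.toDual ℝ (EuclideanSpace ℝ (Fin n)) (gradient φ y)
        + InnerProductSpace.toDual ℝ (EuclideanSpace ℝ (Fin n)) (ε⁻¹ • (y - yh))) y :=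
    hφg.add hsq
  have hmin : IsLocalMin (fun p : EuclideanSpace ℝ (Fin n) => φ p + ‖yh - p‖^2/(2*ε)) y := by
    filter_upwards [h1] with p hp
    have h2 : u yh - ‖yh - p‖^2/(2*ε)
        ≤ ⨆ w : ↥(closure Y), (u ↑w - ‖(w : EuclideanSpace ℝ (Fin n)) - p‖^2/(2*ε)) :=
      le_ciSup (hbdd p) (⟨yh, hyhcl⟩ : ↥(closure Y))
    rw [huεy] at hp
    show φ y + ‖yh - y‖ ^ 2 / (2 * ε) ≤ φ p + ‖yh - p‖ ^ 2 / (2 * ε)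
    linarith
  have hzero := hmin.hasFDerivAt_eq_zero hh
  have hgrad : gradient φ y = ε⁻¹ • (yh - y) := by
    have h0 : InnerProductSpace.toDual ℝ (EuclideanSpace ℝ (Fin n))
        (gradient φ y + ε⁻¹ • (y - yh))
        = InnerProductSpace.toDual ℝ (EuclideanSpace ℝ (Fin n)) 0 := by
      rw [map_add, map_zero]; exact hzero
    have h0' := (InnerProductSpace.toDual ℝ (EuclideanSpace ℝ (Fin n))).injective h0
    have hA : gradient φ y = -(ε⁻¹ • (y - yh)) := eq_neg_of_add_eq_zero_left h0'
    have hB : -(ε⁻¹ • (y - yh)) = ε⁻¹ • (yh - y) := by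
      rw [← smul_neg, neg_sub]
    rw [hA, hB]
  have hPnorm : ‖gradient φ y‖ ≤ 2*m := by
    rw [hgrad, norm_smul, Real.norm_eq_abs, abs_of_pos (inv_pos.2 hε)]
    have h := mul_le_mul_of_nonneg_left hr (inv_pos.2 hε).le
    have he : ε⁻¹ * (2*m*ε) = 2*m := by field_simp
    linarith [he ▸ h]
  -- translated test function and local max for u at yh
  have hψ : ContDiff ℝ 2 (fun w : EuclideanSpace ℝ (Fin n) => φ (w + (y - yh))) :=
    hφ.comp (contDiff_id.add contDiff_const)
  have hψgrad : gradient (fun w : EuclideanSpace ℝ (Fin n) => φ (w + (y - yh))) yh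
      = gradient φ y := by
    have ht : HasFDerivAt (fun w : EuclideanSpace ℝ (Fin n) => w + (y - yh))
        (ContinuousLinearMap.id ℝ (EuclideanSpace ℝ (Fin n))) yh :=
      (hasFDerivAt_id yh).add_const _
    have hpt : yh + (y - yh) = y := by abel
    have hφg' : HasFDerivAt φ
        (InnerProductSpace.toDual ℝ (EuclideanSpace ℝ (Fin n)) (gradient φ y))
        (yh + (y - yh)) := by
      rw [hpt]; exact hφg
    have hcomp := hφg'.comp yh ht
    rw [ContinuousLinearMap.comp_id] at hcomp
    exact (hasGradientAt_iff_hasFDerivAt.mpr hcomp).gradient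
  have hmaxψ : IsLocalMax
      (fun w : EuclideanSpace ℝ (Fin n) => u w - (fun w => φ (w + (y - yh))) w) yh := by
    have hT : Filter.Tendsto (fun w : EuclideanSpace ℝ (Fin n) => w + (y - yh))
        (nhds yh) (nhds y) := by
      have hc : Continuous (fun w : EuclideanSpace ℝ (Fin n) => w + (y - yh)) :=
        continuous_id.add continuous_const
      have := hc.tendsto yh
      simpa [show yh + (y - yh) = y by abel] using this
    have h2 := hT.eventually h1
    have h3 : ∀ᶠ w in nhds yh, w ∈ Y := hYopen.eventually_mem hyhY
    filter_upwards [h2, h3] with w hw hwY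
    have hwcl : w ∈ closure Y := subset_closure hwY
    have h4 : u w - ‖w - (w + (y - yh))‖^2/(2*ε)
        ≤ ⨆ v : ↥(closure Y),
          (u ↑v - ‖(v : EuclideanSpace ℝ (Fin n)) - (w + (y - yh))‖^2/(2*ε)) :=
      le_ciSup (hbdd _) (⟨w, hwcl⟩ : ↥(closure Y))
    have h5 : w - (w + (y - yh)) = yh - y := by abel
    rw [h5] at h4
    rw [huεy] at hw
    have h6 : φ (yh + (y - yh)) = φ y := by rw [show yh + (y - yh) = y by abel]
    show u w - φ (w + (y - yh)) ≤ u yh - φ (yh + (y - yh))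
    rw [h6]
    linarith
  have hsub := hsol.1.2 (fun w => φ (w + (y - yh))) hψ yh hyhY hmaxψ
  rw [hψgrad] at hsub
  -- conclude
  rw [huεy]
  set P := gradient φ y with hP
  set q : ℝ := u yh - ‖yh - y‖^2/(2*ε) with hq
  have hF1 := hF y yh q (u yh) P
  have h7 : F y q P ≤ F yh (u yh) P + C*‖P‖*(|q - u yh| + ‖y - yh‖) := by
    have := (le_abs_self (F y q P - F yh (u yh) P)).trans hF1
    linarith
  have habs : |q - u yh| = ‖yh - y‖^2/(2*ε) := by
    rw [hq]
    have : u yh - ‖yh - y‖^2/(2*ε) - u yh = -(‖yh - y‖^2/(2*ε)) := by ring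
    rw [this, abs_neg, abs_of_nonneg (by positivity)]
  have h8 : ‖yh - y‖^2/(2*ε) ≤ 2*m^2*ε := by
    rw [div_le_iff₀ h2ε]
    nlinarith [norm_nonneg (yh - y), hr]
  have h9 : ‖y - yh‖ ≤ 2*m*ε := by rw [norm_sub_rev]; exact hr
  have hP0 : (0:ℝ) ≤ ‖P‖ := norm_nonneg _
  have hbig : C*‖P‖*(|q - u yh| + ‖y - yh‖) ≤ (4*C*m^3 + 4*C*m^2)*ε := by
    rw [habs]
    have hd0 : (0:ℝ) ≤ ‖yh - y‖^2/(2*ε) := by positivity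
    have hsum : ‖yh - y‖^2/(2*ε) + ‖y - yh‖ ≤ 2*m^2*ε + 2*m*ε := add_le_add h8 h9
    have h10 : C*‖P‖ ≤ C*(2*m) := mul_le_mul_of_nonneg_left hPnorm hC
    have h12 := mul_le_mul h10 hsum (by positivity) (mul_nonneg hC (by linarith))
    have hring : C*(2*m)*(2*m^2*ε + 2*m*ε) = (4*C*m^3 + 4*C*m^2)*ε := by ring
    linarith
  linarith
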